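/- Let A be a symmetric n×n real matrix, B ∈ ℝ^{n×k} with full column rank (k < n), and let E_max(A) denote the eigenspace of A for its largest eigenvalue. If E_max(A) ∩ im(B) = {0}, then the largest generalized eigenvalue of the pencil (BᵀAB, BᵀB) is strictly less than λ_max(A); i.e., max over nonzero y ∈ ℝᵏ of (yᵀBᵀABy)/(yᵀBᵀBy) < λ_max(A). -/

import Mathlib

open Matrix

/-- If the top eigenspace of a symmetric matrix `A` intersects the column space of a
full-column-rank matrix `B` trivially, then the largest generalized eigenvalue of the
pencil `(BᵀAB, BᵀB)` is strictly less than `λ_max(A)`. -/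
theorem stmt3 {n k : ℕ} (hkn : k < n)
    (A : Matrix (Fin n) (Fin n) ℝ) (hA : A.IsHermitian)
    (B : Matrix (Fin n) (Fin k) ℝ) (hB : Function.Injective B.mulVec)
    (lmax : ℝ) (hub : ∀ i, hA.eigenvalues i ≤ lmax) (hatt : ∃ i, hA.eigenvalues i = lmax)
    (htriv : ∀ x : Fin n → ℝ, A.mulVec x = lmax • x → (∃ y, B.mulVec y = x) → x = 0) :
    ∀ y : Fin k → ℝ, y ≠ 0 →
      (B.mulVec y ⬝ᵥ A.mulVec (B.mulVec y)) / (B.mulVec y ⬝ᵥ B.mulVec y) < lmax := by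
  intro y hy
  set x : Fin n → ℝ := B.mulVec y with hx
  have hxne : x ≠ 0 := by
    intro h
    exact hy (hB (by rw [← hx, h]; simp [mulVec_zero]))
  set U : Matrix (Fin n) (Fin n) ℝ := (hA.eigenvectorUnitary : Matrix (Fin n) (Fin n) ℝ) with hU
  have hUU : U * star U = 1 := mem_unitaryGroup_iff.mp hA.eigenvectorUnitary.2
  have hsU : star U = Uᵀ := rfl
  obtain ⟨w, hw⟩ : ∃ w : Fin n → ℝ, (star U) *ᵥ x = w := ⟨_, rfl⟩
  have hUw : U *ᵥ w = x := by
    rw [← hw, mulVec_mulVec, hUU, one_mulVec]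
  have hdot : ∀ z : Fin n → ℝ, x ⬝ᵥ (U *ᵥ z) = w ⬝ᵥ z := by
    intro z
    rw [dotProduct_mulVec, ← mulVec_transpose, ← hsU, hw]
  -- x ⬝ x = ∑ w i ^ 2
  have hxx : x ⬝ᵥ x = ∑ i, w i ^ 2 := by
    have := hdot w
    rw [hUw] at this
    rw [this, dotProduct]
    exact Finset.sum_congr rfl fun i _ => (pow_two _).symm
  set D : Matrix (Fin n) (Fin n) ℝ := diagonal hA.eigenvalues with hD
  have hspec : A = U * D * star U := by
    have := hA.spectral_theorem
    rw [Unitary.conjStarAlgAut_apply, RCLike.ofReal_real_eq_id, Function.id_comp] at this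
    convert this using 2
  have hDw : D *ᵥ w = fun i => hA.eigenvalues i * w i := by
    ext i
    simp [hD, mulVec_diagonal]
  have hxAx : x ⬝ᵥ A *ᵥ x = ∑ i, hA.eigenvalues i * w i ^ 2 := by
    conv_lhs => rw [hspec]
    rw [mul_assoc, ← mulVec_mulVec, ← mulVec_mulVec, hw, hdot, hDw, dotProduct]
    exact Finset.sum_congr rfl fun i _ => by ring
  have hwne : w ≠ 0 := by
    intro h
    rw [h, mulVec_zero] at hUw
    exact hxne hUw.symm
  obtain ⟨j, hj⟩ := Function.ne_iff.mp hwne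
  have hj' : w j ≠ 0 := hj
  have hpos : (0 : ℝ) < ∑ i, w i ^ 2 := by
    exact Finset.sum_pos' (fun i _ => sq_nonneg _) ⟨j, Finset.mem_univ j, by positivity⟩
  rw [hxAx, hxx, div_lt_iff₀ hpos]
  by_contra hcon
  push_neg at hcon
  have hle : ∀ i ∈ Finset.univ, hA.eigenvalues i * w i ^ 2 ≤ lmax * w i ^ 2 :=
    fun i _ => mul_le_mul_of_nonneg_right (hub i) (sq_nonneg _)
  have hsum : ∑ i, hA.eigenvalues i * w i ^ 2 = ∑ i, lmax * w i ^ 2 := by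
    refine le_antisymm (Finset.sum_le_sum hle) ?_
    rw [← Finset.mul_sum]
    exact hcon
  have heach := (Finset.sum_eq_sum_iff_of_le hle).mp hsum
  have hDwl : D *ᵥ w = lmax • w := by
    rw [hDw]
    ext i
    have := heach i (Finset.mem_univ i)
    rcases eq_or_ne (w i) 0 with h0 | h0
    · simp [h0]
    · have : hA.eigenvalues i = lmax := by
        have hsq : (0:ℝ) < w i ^ 2 := by positivity
        exact mul_right_cancel₀ (ne_of_gt hsq) this
      simp [this]
  have hAx : A *ᵥ x = lmax • x := by
    conv_lhs => rw [hspec]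
    rw [← mulVec_mulVec, ← mulVec_mulVec, hw, hDwl, mulVec_smul, hUw]
  exact hxne (htriv x hAx ⟨y, hx.symm⟩)
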